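/- Let L be a nondegenerate E-lattice with L = θL' and let ρ ∈ L be a primitive null vector. Then there exists w ∈ L with ⟨ρ,w⟩ = θ and ⟨w,w⟩ = 0, and span_E(ρ,w) is an orthogonal direct summand of L isometric to E² with Gram matrix [[0,θ],[θ̄,0]]. -/

import Mathlib

noncomputable section

def ω : ℂ := -1/2 + (Real.sqrt 3 / 2) * Complex.I
def θ : ℂ := ω - (starRingEnd ℂ) ω
def Eis : Subring ℂ := Subring.closure {ω}

open Complex

lemma ω_re : ω.re = -1/2 := by simp [ω]
lemma ω_im : ω.im = Real.sqrt 3 / 2 := by simp [ω]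

lemma sqrt3_sq : Real.sqrt 3 * Real.sqrt 3 = 3 :=
  Real.mul_self_sqrt (by norm_num)

lemma ω_sq : ω * ω = -1 - ω := by
  apply Complex.ext <;>
    simp [Complex.mul_re, Complex.mul_im, ω_re, ω_im] <;> nlinarith [sqrt3_sq]

lemma conj_ω : (starRingEnd ℂ) ω = -1 - ω := by
  apply Complex.ext <;> simp [ω_re, ω_im] <;> norm_num

lemma θ_eq : θ = 1 + 2 * ω := by
  rw [θ, conj_ω]; ring

lemma θ_sq : θ * θ = -3 := by
  rw [θ_eq]; ring_nf; rw [pow_two, ω_sq]; ring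

lemma θ_im : θ.im = Real.sqrt 3 := by
  rw [θ_eq]; simp [Complex.add_im, Complex.mul_im, ω_im, ω_re]; ring

lemma θ_re : θ.re = 0 := by
  rw [θ_eq]; simp [Complex.add_re, Complex.mul_re, ω_re, ω_im]; norm_num

lemma θ_ne : θ ≠ 0 := by
  intro h
  have h1 := θ_im
  rw [h] at h1
  simp at h1
  have : (0:ℝ) < Real.sqrt 3 := Real.sqrt_pos.mpr (by norm_num)
  linarith

lemma conj_θ : (starRingEnd ℂ) θ = -θ := by
  apply Complex.ext <;> simp [θ_re, θ_im]

lemma ω_mem : ω ∈ Eis := Subring.subset_closure rfl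

lemma mem_Eis_iff {z : ℂ} : z ∈ Eis ↔ ∃ a b : ℤ, z = (a : ℂ) + (b : ℂ) * ω := by
  constructor
  · intro hz
    induction hz using Subring.closure_induction with
    | mem x hx => exact ⟨0, 1, by simp [Set.mem_singleton_iff.mp hx]⟩
    | zero => exact ⟨0, 0, by simp⟩
    | one => exact ⟨1, 0, by simp⟩
    | add x y hx hy ihx ihy =>
      obtain ⟨a, b, rfl⟩ := ihx; obtain ⟨c, d, rfl⟩ := ihy
      exact ⟨a + c, b + d, by push_cast; ring⟩
    | neg x hx ihx =>
      obtain ⟨a, b, rfl⟩ := ihx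
      exact ⟨-a, -b, by push_cast; ring⟩
    | mul x y hx hy ihx ihy =>
      obtain ⟨a, b, rfl⟩ := ihx; obtain ⟨c, d, rfl⟩ := ihy
      refine ⟨a * c - b * d, a * d + b * c - b * d, ?_⟩
      have h : ((a:ℂ) + b * ω) * (c + d * ω) = a*c + (a*d + b*c) * ω + (b*d) * (ω*ω) := by ring
      rw [h, ω_sq]; push_cast; ring
  · rintro ⟨a, b, rfl⟩
    exact add_mem (intCast_mem Eis a) (mul_mem (intCast_mem Eis b) ω_mem)

lemma conj_mem_Eis {z : ℂ} (hz : z ∈ Eis) : (starRingEnd ℂ) z ∈ Eis := by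
  obtain ⟨a, b, rfl⟩ := mem_Eis_iff.mp hz
  have h : (starRingEnd ℂ) ((a:ℂ) + b * ω) = ((a - b : ℤ) : ℂ) + ((-b : ℤ) : ℂ) * ω := by
    rw [map_add, map_mul, conj_ω]
    push_cast
    simp
    ring
  rw [h]
  exact mem_Eis_iff.mpr ⟨a - b, -b, rfl⟩

lemma normSq_Eis {z : ℂ} (hz : z ∈ Eis) : ∃ n : ℕ, Complex.normSq z = n := by
  obtain ⟨a, b, rfl⟩ := mem_Eis_iff.mp hz
  have h1 : Complex.normSq ((a:ℂ) + b * ω) = ((a:ℝ) + b * ω.re)^2 + (b * ω.im)^2 := by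
    simp [Complex.normSq_apply, Complex.add_re, Complex.add_im, Complex.mul_re, Complex.mul_im]
    ring
  have h2 : Complex.normSq ((a:ℂ) + b * ω) = ((a^2 - a*b + b^2 : ℤ) : ℝ) := by
    rw [h1, ω_re, ω_im]; push_cast; nlinarith [sqrt3_sq]
  have hnn : (0:ℤ) ≤ a^2 - a*b + b^2 := by nlinarith [sq_nonneg (a - b), sq_nonneg a, sq_nonneg b]
  refine ⟨(a^2 - a*b + b^2).toNat, ?_⟩
  rw [h2]
  exact_mod_cast (Int.toNat_of_nonneg hnn).symm

lemma Eis_round (z : ℂ) : ∃ q ∈ Eis, Complex.normSq (z - q) < 1 := by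
  have hs : (0:ℝ) < Real.sqrt 3 := Real.sqrt_pos.mpr (by norm_num)
  set b : ℤ := round (z.im * 2 / Real.sqrt 3) with hb
  set a : ℤ := round (z.re + (b:ℝ) / 2) with ha
  refine ⟨(a:ℂ) + (b:ℂ) * ω, mem_Eis_iff.mpr ⟨a, b, rfl⟩, ?_⟩
  set r : ℝ := z.re + (b:ℝ)/2 - a with hr
  set u : ℝ := z.im * 2 / Real.sqrt 3 - b with hu
  have h1 : |r| ≤ 1/2 := by rw [hr, ha]; exact abs_sub_round _
  have h2 : |u| ≤ 1/2 := by rw [hu, hb]; exact abs_sub_round _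
  have h1' : r^2 ≤ 1/4 := by nlinarith [(abs_le.mp h1).1, (abs_le.mp h1).2]
  have h2' : u^2 ≤ 1/4 := by nlinarith [(abs_le.mp h2).1, (abs_le.mp h2).2]
  have hre : (z - ((a:ℂ) + (b:ℂ) * ω)).re = r := by
    simp [Complex.sub_re, Complex.add_re, Complex.mul_re, ω_re, ω_im, hr]; ring
  have hzm : z.im = (u + b) * (Real.sqrt 3 / 2) := by
    rw [hu]; field_simp; ring
  have him : (z - ((a:ℂ) + (b:ℂ) * ω)).im = u * (Real.sqrt 3 / 2) := by
    simp [Complex.sub_im, Complex.add_im, Complex.mul_im, ω_re, ω_im, hzm]; ring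
  rw [Complex.normSq_apply, hre, him]
  nlinarith [sqrt3_sq]

/-- If `L` is a nondegenerate Eisenstein lattice with `L = θL'` and `ρ ∈ L` is a
primitive null vector, then there is `w ∈ L` with `⟨ρ,w⟩ = θ`, `⟨w,w⟩ = 0`, and
`span_Eis(ρ,w)` is an orthogonal direct summand of `L` (isometric to `Eis²` with
Gram matrix `[[0,θ],[θ̄,0]]`). -/
theorem stmt11 {V : Type*} [AddCommGroup V] [Module ℂ V]
    (B : V → V → ℂ)
    (hBadd : ∀ x y z : V, B (x + y) z = B x z + B y z)
    (hBsmul : ∀ (c : ℂ) (x y : V), B (c • x) y = c * B x y)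
    (hherm : ∀ x y : V, B y x = (starRingEnd ℂ) (B x y))
    (L : Set V)
    (h0 : (0 : V) ∈ L)
    (hadd : ∀ x ∈ L, ∀ y ∈ L, x + y ∈ L)
    (hneg : ∀ x ∈ L, -x ∈ L)
    (hω : ∀ x ∈ L, ω • x ∈ L)
    (hspan : Submodule.span ℂ L = ⊤)
    (hnd : ∀ v : V, (∀ x ∈ L, B x v = 0) → v = 0)
    (hdual : L = {z | ∃ v : V, (∀ x ∈ L, B x v ∈ Eis) ∧ z = θ • v})
    (ρ : V) (hρ : ρ ∈ L) (hnull : B ρ ρ = 0)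
    (hprim : ∀ α ∈ Eis, ∀ v ∈ L, ρ = α • v → ∃ β ∈ Eis, α * β = 1) :
    ∃ w ∈ L, B ρ w = θ ∧ B w w = 0 ∧
      ∀ x ∈ L, ∃ a ∈ Eis, ∃ b ∈ Eis, ∃ z ∈ L,
        B z ρ = 0 ∧ B z w = 0 ∧ x = a • ρ + b • w + z := by
  classical
  -- linearity in the second argument
  have hB2smul : ∀ (c : ℂ) (x y : V), B x (c • y) = (starRingEnd ℂ) c * B x y := by
    intro c x y
    rw [hherm (c • y) x, hBsmul, map_mul, hherm x y, Complex.conj_conj]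
  have hBneg : ∀ x y : V, B (-x) y = -B x y := by
    intro x y
    rw [← neg_one_smul ℂ x, hBsmul]; ring
  have hBsub : ∀ x y z : V, B (x - y) z = B x z - B y z := by
    intro x y z
    rw [sub_eq_add_neg, hBadd, hBneg, sub_eq_add_neg]
  have hB2add : ∀ x y z : V, B x (y + z) = B x y + B x z := by
    intro x y z
    rw [hherm (y + z) x, hBadd, map_add, hherm x y, hherm x z, Complex.conj_conj,
      Complex.conj_conj]
  -- L is closed under Eis-scalars and subtraction
  have hLsmul : ∀ c ∈ Eis, ∀ x ∈ L, c • x ∈ L := by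
    intro c hc
    induction hc using Subring.closure_induction with
    | mem d hd =>
      intro x hx
      rw [Set.mem_singleton_iff.mp hd]; exact hω x hx
    | zero => intro x hx; simpa using h0
    | one => intro x hx; simpa using hx
    | add d e hd he ihd ihe =>
      intro x hx; rw [add_smul]; exact hadd _ (ihd x hx) _ (ihe x hx)
    | neg d hd ihd => intro x hx; rw [neg_smul]; exact hneg _ (ihd x hx)
    | mul d e hd he ihd ihe => intro x hx; rw [mul_smul]; exact ihd _ (ihe x hx)
  have hLsub : ∀ x ∈ L, ∀ y ∈ L, x - y ∈ L := by
    intro x hx y hy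
    rw [sub_eq_add_neg]; exact hadd _ hx _ (hneg _ hy)
  -- all inner products of lattice vectors lie in θ·Eis
  have hvals : ∀ x ∈ L, ∀ y ∈ L, ∃ e ∈ Eis, B x y = θ * e := by
    intro x hx y hy
    rw [hdual] at hy
    obtain ⟨v, hv, rfl⟩ := hy
    refine ⟨-(B x v), neg_mem (hv x hx), ?_⟩
    rw [hB2smul, conj_θ]; ring
  -- the ideal J of values ⟨x,ρ⟩/θ is contained in Eis
  have hJEis : ∀ d : ℂ, (∃ x ∈ L, B x ρ = θ * d) → d ∈ Eis := by
    rintro d ⟨x, hx, hxe⟩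
    obtain ⟨e, heE, hee⟩ := hvals x hx ρ hρ
    have : d = e := mul_left_cancel₀ θ_ne (by rw [← hxe, ← hee])
    rwa [this]
  -- J is nonzero
  have hJne : ∃ d : ℂ, d ≠ 0 ∧ ∃ x ∈ L, B x ρ = θ * d := by
    by_contra hcon
    push_neg at hcon
    have hρ0 : ρ = 0 := by
      apply hnd
      intro x hx
      obtain ⟨e, heE, hee⟩ := hvals x hx ρ hρ
      by_cases he0 : e = 0
      · rw [hee, he0, mul_zero]
      · exact absurd hee (hcon e he0 x hx)
    obtain ⟨β, hβE, hβ⟩ := hprim 0 (zero_mem Eis) 0 h0 (by rw [hρ0]; simp)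
    simp at hβ
  -- pick a generator δ of J of minimal norm
  obtain ⟨d₀, hd₀ne, hd₀⟩ := hJne
  obtain ⟨n₀, hn₀⟩ := normSq_Eis (hJEis d₀ hd₀)
  have hS : ∃ n : ℕ, ∃ d : ℂ, d ≠ 0 ∧ (∃ x ∈ L, B x ρ = θ * d) ∧ Complex.normSq d = n :=
    ⟨n₀, d₀, hd₀ne, hd₀, hn₀⟩
  obtain ⟨δ, hδne, hδJ, hδn⟩ := Nat.find_spec hS
  have hδE : δ ∈ Eis := hJEis δ hδJ
  -- every element of J is an Eis-multiple of δ
  have hdiv : ∀ d : ℂ, (∃ x ∈ L, B x ρ = θ * d) → ∃ q ∈ Eis, d = q * δ := by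
    intro d hd
    obtain ⟨q, hqE, hq⟩ := Eis_round (d / δ)
    refine ⟨q, hqE, ?_⟩
    have hr : ∃ x ∈ L, B x ρ = θ * (d - q * δ) := by
      obtain ⟨x, hx, hxe⟩ := hd
      obtain ⟨y, hy, hye⟩ := hδJ
      refine ⟨x - q • y, hLsub _ hx _ (hLsmul q hqE y hy), ?_⟩
      rw [hBsub, hBsmul, hxe, hye]; ring
    by_cases h0' : d - q * δ = 0
    · linear_combination h0'
    · exfalso
      obtain ⟨m, hm⟩ := normSq_Eis (hJEis _ hr)
      have heq : d - q * δ = δ * (d / δ - q) := by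
        field_simp
      have hlt : Complex.normSq (d - q * δ) < Complex.normSq δ := by
        rw [heq, Complex.normSq_mul]
        calc Complex.normSq δ * Complex.normSq (d / δ - q)
            < Complex.normSq δ * 1 :=
              mul_lt_mul_of_pos_left hq (Complex.normSq_pos.mpr hδne)
          _ = Complex.normSq δ := mul_one _
      have hmN : m < Nat.find hS := by
        rw [hm, hδn] at hlt
        exact_mod_cast hlt
      exact Nat.find_min hS hmN ⟨d - q * δ, h0', hr, hm⟩
  -- δ is a unit, by primitivity of ρ
  have hθδ : θ * (starRingEnd ℂ) δ ≠ 0 := by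
    apply mul_ne_zero θ_ne
    simpa using hδne
  obtain ⟨β, hβE, hβ⟩ : ∃ β ∈ Eis, (starRingEnd ℂ) δ * β = 1 := by
    set u : V := (θ * (starRingEnd ℂ) δ)⁻¹ • ρ with hu
    have huE : ∀ x ∈ L, B x u ∈ Eis := by
      intro x hx
      obtain ⟨e, heE, hee⟩ := hvals x hx ρ hρ
      obtain ⟨q, hqE, hqq⟩ := hdiv e ⟨x, hx, hee⟩
      have hxu : B x u = -q := by
        rw [hu, hB2smul, map_inv₀, map_mul, conj_θ, Complex.conj_conj, hee, hqq]
        field_simp [θ_ne, hδne]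
      rw [hxu]; exact neg_mem hqE
    have hθu : θ • u ∈ L := by
      rw [hdual]; exact ⟨u, huE, rfl⟩
    have hcoef : (starRingEnd ℂ) δ * θ * (θ * (starRingEnd ℂ) δ)⁻¹ = 1 := by
      rw [mul_comm ((starRingEnd ℂ) δ) θ]
      exact mul_inv_cancel₀ hθδ
    have hρeq : ρ = (starRingEnd ℂ) δ • (θ • u) := by
      rw [hu, smul_smul, smul_smul, hcoef, one_smul]
    exact hprim _ (conj_mem_Eis hδE) _ hθu hρeq
  have hδβ : δ * (starRingEnd ℂ) β = 1 := by
    have h := congrArg (starRingEnd ℂ) hβ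
    simpa using h
  obtain ⟨x₀, hx₀, hx₀e⟩ := hδJ
  -- construct w₁ with ⟨w₁,ρ⟩ = -θ
  obtain ⟨w₁, hw₁L, hw₁ρ⟩ : ∃ w₁ ∈ L, B w₁ ρ = -θ := by
    refine ⟨(-(starRingEnd ℂ) β) • x₀, hLsmul _ (neg_mem (conj_mem_Eis hβE)) _ hx₀, ?_⟩
    rw [hBsmul, hx₀e]
    linear_combination -θ * hδβ
  have hρw₁ : B ρ w₁ = θ := by
    rw [hherm w₁ ρ, hw₁ρ, map_neg, conj_θ, neg_neg]
  -- correct w₁ to a null vector w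
  obtain ⟨e, heE, hee⟩ := hvals w₁ hw₁L w₁ hw₁L
  have hconj_e : (starRingEnd ℂ) e = -e := by
    have h1 : (starRingEnd ℂ) (B w₁ w₁) = B w₁ w₁ := (hherm w₁ w₁).symm
    rw [hee, map_mul, conj_θ] at h1
    exact mul_left_cancel₀ θ_ne (by linear_combination -h1 :
      θ * (starRingEnd ℂ) e = θ * (-e))
  obtain ⟨p, sInt, hps⟩ := mem_Eis_iff.mp heE
  have hs2p : (sInt : ℝ) = 2 * p := by
    have hre : e.re = 0 := by
      have h2 := congrArg Complex.re hconj_e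
      simp at h2
      linarith
    rw [hps] at hre
    simp [Complex.add_re, Complex.mul_re, ω_re, ω_im] at hre
    linarith
  have hepθ : e = (p : ℂ) * θ := by
    have hsc : (sInt : ℂ) = 2 * p := by exact_mod_cast congrArg Complex.ofReal hs2p
    rw [hps, θ_eq, hsc]; ring
  have hconj_t : (starRingEnd ℂ) (-(p : ℂ) * ω) = (p : ℂ) + (p : ℂ) * ω := by
    rw [map_mul, conj_ω, map_neg, map_intCast]
    ring
  have htE : (-(p : ℂ) * ω) ∈ Eis := mul_mem (neg_mem (intCast_mem Eis p)) ω_mem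
  obtain ⟨w, hwL, hρw, hww⟩ : ∃ w ∈ L, B ρ w = θ ∧ B w w = 0 := by
    refine ⟨w₁ + (-(p : ℂ) * ω) • ρ, hadd _ hw₁L _ (hLsmul _ htE ρ hρ), ?_, ?_⟩
    · rw [hB2add, hB2smul, hρw₁, hnull, hconj_t, mul_zero, add_zero]
    · rw [hBadd, hB2add, hB2add, hBsmul, hBsmul, hB2smul, hB2smul, hconj_t,
        hnull, hw₁ρ, hρw₁, hee, hepθ]
      linear_combination ((p : ℂ) * θ) * θ_eq
  have hwρ : B w ρ = -θ := by
    rw [hherm ρ w, hρw, conj_θ]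
  refine ⟨w, hwL, hρw, hww, ?_⟩
  -- orthogonal decomposition
  intro x hx
  obtain ⟨eb, hebE, heb⟩ := hvals x hx ρ hρ
  obtain ⟨ea, heaE, hea⟩ := hvals x hx w hwL
  refine ⟨ea, heaE, -eb, neg_mem hebE, x - ea • ρ - (-eb) • w,
    hLsub _ (hLsub _ hx _ (hLsmul ea heaE ρ hρ)) _ (hLsmul _ (neg_mem hebE) w hwL), ?_, ?_, ?_⟩
  · rw [hBsub, hBsub, hBsmul, hBsmul, heb, hnull, hwρ]
    ring
  · rw [hBsub, hBsub, hBsmul, hBsmul, hea, hρw, hww]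
    ring
  · abel_nf
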